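/- The polynomial q_{0,3}³ + q_{0,3}² q_{1,2} - 2 q_{0,2} q_{0,3} q_{1,3} + q_{0,1} q_{1,3}² + q_{0,2}² q_{2,3} - q_{0,1} q_{0,3} q_{2,3} - q_{0,1} q_{1,2} q_{2,3} vanishes at the dual Plücker coordinates q_{i,j} = a_i b_j - a_j b_i of two planes if and only if the two cubics a₀s³+a₁s²t+a₂st²+a₃t³ and b₀s³+b₁s²t+b₂st²+b₃t³ have a common root (s:t) in ℙ¹, assuming the cubics are not both identically zero and (a₀,...,a₃), (b₀,...,b₃) are linearly independent. -/

import Mathlib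

/-- Dual Plücker coordinates qᵢⱼ = aᵢbⱼ - aⱼbᵢ of the line cut out by the planes
Σaᵢxᵢ = 0 and Σbᵢxᵢ = 0. -/
def dualPluecker (a b : Fin 4 → ℂ) (i j : Fin 4) : ℂ := a i * b j - a j * b i

open Polynomial in
lemma cubic_roots' (c1 c2 c3 : ℂ) :
    ∃ r1 r2 r3 : ℂ, r1 + r2 + r3 = -c1 ∧ r1*r2 + r1*r3 + r2*r3 = c2 ∧ r1*r2*r3 = -c3 := by
  have hdeg : (C (1:ℂ) * X ^ 3 + C c1 * X ^ 2 + C c2 * X + C c3).degree = 3 :=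
    degree_cubic one_ne_zero
  obtain ⟨r1, hr1⟩ := IsAlgClosed.exists_root (C (1:ℂ) * X ^ 3 + C c1 * X ^ 2 + C c2 * X + C c3)
    (by rw [hdeg]; norm_num)
  have hroot : r1 ^ 3 + c1 * r1 ^ 2 + c2 * r1 + c3 = 0 := by
    have := hr1
    simp [IsRoot, eval_add, eval_mul, eval_pow] at this
    linear_combination this
  obtain ⟨d, hd⟩ := IsAlgClosed.exists_pow_nat_eq ((c1 + r1)^2 - 4*(c2 + c1*r1 + r1^2))
    (n := 2) (by norm_num)
  refine ⟨r1, (-(c1 + r1) + d)/2, (-(c1 + r1) - d)/2, by ring, ?_, ?_⟩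
  · linear_combination (-1/4 : ℂ) * hd
  · linear_combination (-r1/4) * hd + hroot

lemma key_lemma (a b : Fin 4 → ℂ) (ha : a 0 ≠ 0) :
    (dualPluecker a b 0 3 ^ 3 + dualPluecker a b 0 3 ^ 2 * dualPluecker a b 1 2
        - 2 * dualPluecker a b 0 2 * dualPluecker a b 0 3 * dualPluecker a b 1 3
        + dualPluecker a b 0 1 * dualPluecker a b 1 3 ^ 2
        + dualPluecker a b 0 2 ^ 2 * dualPluecker a b 2 3
        - dualPluecker a b 0 1 * dualPluecker a b 0 3 * dualPluecker a b 2 3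
        - dualPluecker a b 0 1 * dualPluecker a b 1 2 * dualPluecker a b 2 3 = 0)
      ↔ ∃ s t : ℂ, ¬ (s = 0 ∧ t = 0) ∧
          a 0 * s ^ 3 + a 1 * s ^ 2 * t + a 2 * s * t ^ 2 + a 3 * t ^ 3 = 0 ∧
          b 0 * s ^ 3 + b 1 * s ^ 2 * t + b 2 * s * t ^ 2 + b 3 * t ^ 3 = 0 := by
  obtain ⟨r1, r2, r3, h1, h2, h3⟩ := cubic_roots' (a 1 / a 0) (a 2 / a 0) (a 3 / a 0)
  have ha1 : a 1 = -(a 0 * (r1 + r2 + r3)) := by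
    field_simp at h1; linear_combination h1
  have ha2 : a 2 = a 0 * (r1*r2 + r1*r3 + r2*r3) := by
    field_simp at h2; linear_combination -h2
  have ha3 : a 3 = -(a 0 * (r1*r2*r3)) := by
    field_simp at h3; linear_combination h3
  have identity : dualPluecker a b 0 3 ^ 3 + dualPluecker a b 0 3 ^ 2 * dualPluecker a b 1 2
        - 2 * dualPluecker a b 0 2 * dualPluecker a b 0 3 * dualPluecker a b 1 3
        + dualPluecker a b 0 1 * dualPluecker a b 1 3 ^ 2
        + dualPluecker a b 0 2 ^ 2 * dualPluecker a b 2 3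
        - dualPluecker a b 0 1 * dualPluecker a b 0 3 * dualPluecker a b 2 3
        - dualPluecker a b 0 1 * dualPluecker a b 1 2 * dualPluecker a b 2 3
      = a 0 ^ 3 * (b 0 * r1^3 + b 1 * r1^2 + b 2 * r1 + b 3)
          * (b 0 * r2^3 + b 1 * r2^2 + b 2 * r2 + b 3)
          * (b 0 * r3^3 + b 1 * r3^2 + b 2 * r3 + b 3) := by
    simp only [dualPluecker]
    rw [ha1, ha2, ha3]
    ring
  constructor
  · intro hchow
    rw [identity] at hchow
    have h0 : (b 0 * r1^3 + b 1 * r1^2 + b 2 * r1 + b 3)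
          * (b 0 * r2^3 + b 1 * r2^2 + b 2 * r2 + b 3)
          * (b 0 * r3^3 + b 1 * r3^2 + b 2 * r3 + b 3) = 0 := by
      rw [mul_assoc, mul_assoc] at hchow
      have h := (mul_eq_zero.mp hchow).resolve_left (pow_ne_zero 3 ha)
      linear_combination h
    have hfr : ∀ r : ℂ, (r = r1 ∨ r = r2 ∨ r = r3) →
        a 0 * r ^ 3 + a 1 * r ^ 2 * 1 + a 2 * r * 1 ^ 2 + a 3 * 1 ^ 3 = 0 := by
      rintro r (rfl | rfl | rfl) <;> rw [ha1, ha2, ha3] <;> ring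
    rcases mul_eq_zero.mp h0 with h | h
    · rcases mul_eq_zero.mp h with h | h
      · exact ⟨r1, 1, by simp, hfr r1 (Or.inl rfl), by linear_combination h⟩
      · exact ⟨r2, 1, by simp, hfr r2 (Or.inr (Or.inl rfl)), by linear_combination h⟩
    · exact ⟨r3, 1, by simp, hfr r3 (Or.inr (Or.inr rfl)), by linear_combination h⟩
  · rintro ⟨s, t, hst, hf, hg⟩
    by_cases ht : t = 0
    · subst ht
      have hs : s ≠ 0 := fun h => hst ⟨h, rfl⟩
      have h0 : a 0 * s ^ 3 = 0 := by linear_combination hf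
      exact absurd ((mul_eq_zero.mp h0).resolve_right (pow_ne_zero _ hs)) ha
    · set x := s / t with hx
      have hFx : a 0 * x^3 + a 1 * x^2 + a 2 * x + a 3 = 0 := by
        rw [hx]; field_simp; linear_combination hf
      have hGx : b 0 * x^3 + b 1 * x^2 + b 2 * x + b 3 = 0 := by
        rw [hx]; field_simp; linear_combination hg
      have hprod : a 0 * ((x - r1) * (x - r2) * (x - r3)) = 0 := by
        rw [ha1, ha2, ha3] at hFx; linear_combination hFx
      have hxr : (x - r1) * (x - r2) * (x - r3) = 0 :=
        (mul_eq_zero.mp hprod).resolve_left ha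
      rw [identity]
      rcases mul_eq_zero.mp hxr with h | h
      · rcases mul_eq_zero.mp h with h | h
        · have hG1 : b 0 * r1^3 + b 1 * r1^2 + b 2 * r1 + b 3 = 0 := by
            rw [← sub_eq_zero.mp h]; exact hGx
          rw [hG1]; ring
        · have hG1 : b 0 * r2^3 + b 1 * r2^2 + b 2 * r2 + b 3 = 0 := by
            rw [← sub_eq_zero.mp h]; exact hGx
          rw [hG1]; ring
      · have hG1 : b 0 * r3^3 + b 1 * r3^2 + b 2 * r3 + b 3 = 0 := by
          rw [← sub_eq_zero.mp h]; exact hGx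
        rw [hG1]; ring

/-- The Chow form of the twisted cubic: for two planes Σaᵢxᵢ = 0, Σbᵢxᵢ = 0 in ℙ³
with linearly independent coefficient vectors (in particular not both cubics are zero),
the polynomial q₀₃³ + q₀₃²q₁₂ - 2q₀₂q₀₃q₁₃ + q₀₁q₁₃² + q₀₂²q₂₃ - q₀₁q₀₃q₂₃ - q₀₁q₁₂q₂₃
in the dual Plücker coordinates vanishes if and only if the binary cubics
a₀s³+a₁s²t+a₂st²+a₃t³ and b₀s³+b₁s²t+b₂st²+b₃t³ have a common root (s:t) ∈ ℙ¹. -/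
theorem chow_form_twisted_cubic (a b : Fin 4 → ℂ)
    (hab : LinearIndependent ℂ ![a, b]) :
    (dualPluecker a b 0 3 ^ 3 + dualPluecker a b 0 3 ^ 2 * dualPluecker a b 1 2
        - 2 * dualPluecker a b 0 2 * dualPluecker a b 0 3 * dualPluecker a b 1 3
        + dualPluecker a b 0 1 * dualPluecker a b 1 3 ^ 2
        + dualPluecker a b 0 2 ^ 2 * dualPluecker a b 2 3
        - dualPluecker a b 0 1 * dualPluecker a b 0 3 * dualPluecker a b 2 3
        - dualPluecker a b 0 1 * dualPluecker a b 1 2 * dualPluecker a b 2 3 = 0)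
      ↔ ∃ s t : ℂ, ¬ (s = 0 ∧ t = 0) ∧
          a 0 * s ^ 3 + a 1 * s ^ 2 * t + a 2 * s * t ^ 2 + a 3 * t ^ 3 = 0 ∧
          b 0 * s ^ 3 + b 1 * s ^ 2 * t + b 2 * s * t ^ 2 + b 3 * t ^ 3 = 0 := by
  by_cases ha : a 0 = 0
  · by_cases hb : b 0 = 0
    · constructor
      · intro _
        exact ⟨1, 0, by simp, by rw [ha]; ring, by rw [hb]; ring⟩
      · intro _
        simp only [dualPluecker]
        rw [ha, hb]
        ring
    · have hanti : dualPluecker a b 0 3 ^ 3 + dualPluecker a b 0 3 ^ 2 * dualPluecker a b 1 2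
            - 2 * dualPluecker a b 0 2 * dualPluecker a b 0 3 * dualPluecker a b 1 3
            + dualPluecker a b 0 1 * dualPluecker a b 1 3 ^ 2
            + dualPluecker a b 0 2 ^ 2 * dualPluecker a b 2 3
            - dualPluecker a b 0 1 * dualPluecker a b 0 3 * dualPluecker a b 2 3
            - dualPluecker a b 0 1 * dualPluecker a b 1 2 * dualPluecker a b 2 3
          = -(dualPluecker b a 0 3 ^ 3 + dualPluecker b a 0 3 ^ 2 * dualPluecker b a 1 2
            - 2 * dualPluecker b a 0 2 * dualPluecker b a 0 3 * dualPluecker b a 1 3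
            + dualPluecker b a 0 1 * dualPluecker b a 1 3 ^ 2
            + dualPluecker b a 0 2 ^ 2 * dualPluecker b a 2 3
            - dualPluecker b a 0 1 * dualPluecker b a 0 3 * dualPluecker b a 2 3
            - dualPluecker b a 0 1 * dualPluecker b a 1 2 * dualPluecker b a 2 3) := by
        simp only [dualPluecker]; ring
      rw [hanti, neg_eq_zero, key_lemma b a hb]
      constructor
      · rintro ⟨s, t, h1, h2, h3⟩; exact ⟨s, t, h1, h3, h2⟩
      · rintro ⟨s, t, h1, h2, h3⟩; exact ⟨s, t, h1, h3, h2⟩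
  · exact key_lemma a b ha
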